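/- Let A be an N×N integer matrix, and let Ā and Ã be the two (N+3)×(N+3) matrices defined from A as in the paper (differing only in the (N+2,N+2)-entry). Then the cokernels Z^{N+3}/(1-Ā^t)Z^{N+3} and Z^{N+3}/(1-Ã^t)Z^{N+3} are isomorphic as abelian groups. -/

import Mathlib

/-- Parry–Sullivan expansion at vertex `N = n+1` of an `N × N` matrix `A`:
first `N-1` rows are those of `A` with a `0` appended in column `N+1`,
row `N` is the standard basis vector `e_{N+1}`, and
row `N+1` is row `N` of `A` with a `0` appended. -/
def psExpansion {n : ℕ} (A : Matrix (Fin (n+1)) (Fin (n+1)) ℤ) :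
    Matrix (Fin (n+2)) (Fin (n+2)) ℤ :=
  Matrix.of fun i j =>
    if hi : (i : ℕ) < n then
      if hj : (j : ℕ) < n + 1 then A ⟨i, Nat.lt_succ_of_lt hi⟩ ⟨j, hj⟩ else 0
    else if (i : ℕ) = n then
      if (j : ℕ) = n + 1 then 1 else 0
    else
      if hj : (j : ℕ) < n + 1 then A ⟨n, Nat.lt_succ_self n⟩ ⟨j, hj⟩ else 0

/-- Cuntz splice of an `M × M` matrix `B` (`M = m+1`): the `(M+2) × (M+2)` matrix whose
upper-left `M × M` block is `B`, with (1-based) entries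
`B₋(M,M+1) = B₋(M+1,M) = B₋(M+1,M+1) = B₋(M+1,M+2) = B₋(M+2,M+1) = B₋(M+2,M+2) = 1`
and all other new entries `0`. -/
def cuntzSplice {m : ℕ} (B : Matrix (Fin (m+1)) (Fin (m+1)) ℤ) :
    Matrix (Fin (m+3)) (Fin (m+3)) ℤ :=
  Matrix.of fun i j =>
    if hi : (i : ℕ) < m + 1 then
      if hj : (j : ℕ) < m + 1 then B ⟨i, hi⟩ ⟨j, hj⟩
      else if (i : ℕ) = m ∧ (j : ℕ) = m + 1 then 1 else 0
    else
      if (i : ℕ) = m + 1 then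
        if (j : ℕ) = m ∨ (j : ℕ) = m + 1 ∨ (j : ℕ) = m + 2 then 1 else 0
      else
        if (j : ℕ) = m + 1 ∨ (j : ℕ) = m + 2 then 1 else 0

/-- The subgroup `(1 - Bᵗ)ℤ^k` of `ℤ^k`, i.e. the image of `x ↦ (1 - Bᵗ)x`. -/
def bfSubgroup {k : ℕ} (B : Matrix (Fin k) (Fin k) ℤ) : Submodule ℤ (Fin k → ℤ) :=
  LinearMap.range (Matrix.mulVecLin (1 - B.transpose))

/-- The matrix `Ã`: identical to `Ā = (A°)₋` except that its `(N+2,N+2)`-entry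
(1-based; 0-based index `(n+2,n+2)`) is `0` instead of `1`. -/
def tildeMatrix {n : ℕ} (A : Matrix (Fin (n+1)) (Fin (n+1)) ℤ) :
    Matrix (Fin (n+4)) (Fin (n+4)) ℤ :=
  Matrix.of fun i j =>
    if (i : ℕ) = n + 2 ∧ (j : ℕ) = n + 2 then 0 else cuntzSplice (psExpansion A) i j

section Aux
open Matrix

variable {n : ℕ} (A : Matrix (Fin (n+1)) (Fin (n+1)) ℤ)

private lemma tilde_eq :
    tildeMatrix A = cuntzSplice (psExpansion A)
      - Matrix.single (⟨n+2, by omega⟩ : Fin (n+4)) (⟨n+2, by omega⟩ : Fin (n+4)) 1 := by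
  ext i j
  simp only [tildeMatrix, Matrix.of_apply, Matrix.sub_apply, Matrix.single, Fin.ext_iff]
  by_cases hi : (i : ℕ) = n + 2 <;> by_cases hj : (j : ℕ) = n + 2
  · rw [if_pos ⟨hi, hj⟩, if_pos (by omega),
      show cuntzSplice (psExpansion A) i j = 1 by
        simp only [cuntzSplice, Matrix.of_apply]
        rw [dif_neg (by omega), if_pos (by omega), if_pos (by omega)]]
    norm_num
  · rw [if_neg (by omega), if_neg (by omega), sub_zero]
  · rw [if_neg (by omega), if_neg (by omega), sub_zero]
  · rw [if_neg (by omega), if_neg (by omega), sub_zero]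

private lemma bar_row_last :
    ∀ i : Fin (n+4), cuntzSplice (psExpansion A) ⟨n+3, by omega⟩ i
      = (if (i : ℕ) = n + 2 then 1 else 0) + (if (i : ℕ) = n + 3 then 1 else 0) := by
  intro i
  simp only [cuntzSplice, Matrix.of_apply]
  rw [dif_neg (by omega), if_neg (by omega)]
  by_cases h2 : (i : ℕ) = n + 2 <;> by_cases h3 : (i : ℕ) = n + 3 <;>
    simp [h2, h3] <;> omega

private lemma std_symm :
    (Matrix.single (⟨n+2, by omega⟩ : Fin (n+4)) (⟨n+2, by omega⟩ : Fin (n+4))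
      (1:ℤ)).transpose
    = Matrix.single (⟨n+2, by omega⟩ : Fin (n+4)) (⟨n+2, by omega⟩ : Fin (n+4)) 1 := by
  ext i j
  simp [Matrix.single, and_comm]

private lemma key_identity :
    (1 - (tildeMatrix A).transpose)
      = (1 - (cuntzSplice (psExpansion A)).transpose)
        * (1 - Matrix.single (⟨n+3, by omega⟩ : Fin (n+4)) (⟨n+2, by omega⟩ : Fin (n+4)) 1) := by
  have hAE : (cuntzSplice (psExpansion A)).transpose
      * Matrix.single (⟨n+3, by omega⟩ : Fin (n+4)) (⟨n+2, by omega⟩ : Fin (n+4)) 1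
      = Matrix.single (⟨n+2, by omega⟩ : Fin (n+4)) (⟨n+2, by omega⟩ : Fin (n+4)) 1
        + Matrix.single (⟨n+3, by omega⟩ : Fin (n+4)) (⟨n+2, by omega⟩ : Fin (n+4)) 1 := by
    ext i j
    by_cases hj : j = (⟨n+2, by omega⟩ : Fin (n+4))
    · subst hj
      rw [Matrix.mul_single_apply_same]
      simp only [Matrix.transpose_apply, Matrix.add_apply, Matrix.single, Matrix.of_apply,
        Fin.ext_iff]
      rw [bar_row_last]
      by_cases h2 : (i : ℕ) = n + 2 <;> by_cases h3 : (i : ℕ) = n + 3 <;>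
        simp [h2, h3] <;> omega
    · rw [Matrix.mul_single_apply_of_ne _ _ _ _ _ hj]
      simp only [Matrix.add_apply, Matrix.single, Matrix.of_apply]
      rw [if_neg (fun h => hj h.2.symm), if_neg (fun h => hj h.2.symm)]
      norm_num
  have htr : (tildeMatrix A).transpose
      = (cuntzSplice (psExpansion A)).transpose
        - Matrix.single (⟨n+2, by omega⟩ : Fin (n+4)) (⟨n+2, by omega⟩ : Fin (n+4)) 1 := by
    rw [tilde_eq, Matrix.transpose_sub, std_symm]
  rw [htr, mul_sub, mul_one, sub_mul, one_mul, hAE]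
  abel

private lemma Q_inv :
    (1 - Matrix.single (⟨n+3, by omega⟩ : Fin (n+4)) (⟨n+2, by omega⟩ : Fin (n+4)) (1:ℤ))
      * (1 + Matrix.single (⟨n+3, by omega⟩ : Fin (n+4)) (⟨n+2, by omega⟩ : Fin (n+4)) (1:ℤ))
      = 1 := by
  have h : Matrix.single (⟨n+3, by omega⟩ : Fin (n+4)) (⟨n+2, by omega⟩ : Fin (n+4)) (1:ℤ)
      * Matrix.single (⟨n+3, by omega⟩ : Fin (n+4)) (⟨n+2, by omega⟩ : Fin (n+4)) (1:ℤ) = 0 :=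
    Matrix.single_mul_single_of_ne _ _ _ _ (fun hc => by
      have := congrArg Fin.val hc; simp at this) _
  rw [sub_mul, mul_add, mul_add, one_mul, one_mul, mul_one, h, add_zero]
  abel

private lemma subgroup_eq :
    bfSubgroup (tildeMatrix A) = bfSubgroup (cuntzSplice (psExpansion A)) := by
  unfold bfSubgroup
  rw [key_identity, Matrix.mulVecLin_mul]
  apply LinearMap.range_comp_of_range_eq_top
  rw [LinearMap.range_eq_top]
  intro y
  refine ⟨(1 + Matrix.single (⟨n+3, by omega⟩ : Fin (n+4)) (⟨n+2, by omega⟩ : Fin (n+4))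
    (1:ℤ)).mulVec y, ?_⟩
  rw [Matrix.mulVecLin_apply, Matrix.mulVec_mulVec, Q_inv, Matrix.one_mulVec]

end Aux

/-- The cokernels `ℤ^{N+3}/(1-Āᵗ)ℤ^{N+3}` and `ℤ^{N+3}/(1-Ãᵗ)ℤ^{N+3}` are
isomorphic as abelian groups. -/
theorem coker_bar_iso_coker_tilde {n : ℕ} (A : Matrix (Fin (n+1)) (Fin (n+1)) ℤ) :
    Nonempty (((Fin (n+4) → ℤ) ⧸ bfSubgroup (cuntzSplice (psExpansion A))) ≃+
      ((Fin (n+4) → ℤ) ⧸ bfSubgroup (tildeMatrix A))) := by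
  rw [subgroup_eq]
  exact ⟨AddEquiv.refl _⟩
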